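/- Let N ≥ 1 be an integer, let 0 < p < 1, let 0 < ε < 1, and set μ = Np. If μ ≤ 4·ln(2/ε), then ∑_{k = 0,…,N with |k − μ| > 4·ln(2/ε)} B(k; N, p) < ε. -/

import Mathlib

/-- Let `N ≥ 1` be an integer, `0 < p < 1`, `0 < ε < 1`, and set `μ = N·p`.
If `μ ≤ 4·ln(2/ε)`, then `∑_{k ≤ N, |k - μ| > 4·ln(2/ε)} B(k; N, p) < ε`, where
`B(k; N, p) = C(N,k)·p^k·(1-p)^(N-k)`. -/
theorem binomial_tail_lt_of_small_mean
    (N : ℕ) (hN : 1 ≤ N) (p ε : ℝ)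
    (hp0 : 0 < p) (hp1 : p < 1) (hε0 : 0 < ε) (hε1 : ε < 1)
    (hμ : (N : ℝ) * p ≤ 4 * Real.log (2 / ε)) :
    ∑ k ∈ (Finset.range (N + 1)).filter
        (fun k : ℕ => 4 * Real.log (2 / ε) < |(k : ℝ) - N * p|),
      (N.choose k : ℝ) * p ^ k * (1 - p) ^ (N - k) < ε := by
  have hu : 0 < Real.log (2 / ε) := Real.log_pos (by rw [lt_div_iff₀ hε0]; linarith)
  set L : ℝ := 4 * Real.log (2 / ε) with hLdef
  have hL : 0 < L := by positivity
  set μ : ℝ := (N : ℝ) * p with hμdef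
  have hμ0 : 0 ≤ μ := by positivity
  set a : ℝ := μ + L with hadef
  have hq : (0:ℝ) ≤ 1 - p := by linarith
  have he1 : (1:ℝ) < Real.exp 1 := by
    have := Real.exp_one_gt_d9; linarith
  -- Step 1: bound by the exponentially weighted full sum
  have h1 : ∑ k ∈ (Finset.range (N + 1)).filter
        (fun k : ℕ => L < |(k : ℝ) - μ|),
      (N.choose k : ℝ) * p ^ k * (1 - p) ^ (N - k)
      ≤ ∑ k ∈ Finset.range (N + 1),
        (N.choose k : ℝ) * p ^ k * (1 - p) ^ (N - k) * Real.exp ((k : ℝ) - a) := by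
    refine le_trans (Finset.sum_le_sum ?_)
      (Finset.sum_le_sum_of_subset_of_nonneg (Finset.filter_subset _ _) ?_)
    · intro k hk
      rw [Finset.mem_filter] at hk
      have habs := hk.2
      have hk0 : (0:ℝ) ≤ (k : ℝ) := Nat.cast_nonneg k
      have hka : a ≤ (k : ℝ) := by
        rcases abs_cases ((k:ℝ) - μ) with ⟨h, _⟩ | ⟨h, _⟩
        · rw [h] at habs; linarith
        · rw [h] at habs; linarith
      have hexp : (1:ℝ) ≤ Real.exp ((k : ℝ) - a) := Real.one_le_exp (by linarith)
      have hB : (0:ℝ) ≤ (N.choose k : ℝ) * p ^ k * (1 - p) ^ (N - k) := by positivity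
      nlinarith
    · intro k _ _
      positivity
  -- Step 2: evaluate the weighted sum via the binomial theorem
  have h2 : ∑ k ∈ Finset.range (N + 1),
        (N.choose k : ℝ) * p ^ k * (1 - p) ^ (N - k) * Real.exp ((k : ℝ) - a)
      = Real.exp (-a) * (p * Real.exp 1 + (1 - p)) ^ N := by
    rw [add_pow, Finset.mul_sum]
    refine Finset.sum_congr rfl fun k _ => ?_
    have hek : Real.exp ((k : ℝ)) = Real.exp 1 ^ k := by
      rw [← Real.exp_nat_mul]; norm_num
    rw [show (k:ℝ) - a = (k:ℝ) + (-a) by ring, Real.exp_add, hek, mul_pow]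
    ring
  -- Step 3: bound the binomial factor
  have h3 : (p * Real.exp 1 + (1 - p)) ^ N ≤ Real.exp (μ * (Real.exp 1 - 1)) := by
    have hbase : p * Real.exp 1 + (1 - p) ≤ Real.exp (p * (Real.exp 1 - 1)) := by
      have := Real.add_one_le_exp (p * (Real.exp 1 - 1))
      linarith
    have hbase0 : (0:ℝ) ≤ p * Real.exp 1 + (1 - p) := by positivity
    calc (p * Real.exp 1 + (1 - p)) ^ N
        ≤ (Real.exp (p * (Real.exp 1 - 1))) ^ N := pow_le_pow_left₀ hbase0 hbase N
      _ = Real.exp (μ * (Real.exp 1 - 1)) := by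
          rw [← Real.exp_nat_mul, hμdef]; ring_nf
  -- Step 4: final numeric estimate
  have h4 : Real.exp (-a) * Real.exp (μ * (Real.exp 1 - 1)) < ε := by
    rw [← Real.exp_add]
    have hlogε : Real.log ε = Real.log 2 - Real.log (2 / ε) := by
      rw [Real.log_div (by norm_num) (ne_of_gt hε0)]; ring
    rw [show ε = Real.exp (Real.log ε) from (Real.exp_log hε0).symm]
    apply Real.exp_lt_exp.mpr
    have hed : Real.exp 1 < 2.7182818286 := Real.exp_one_lt_d9
    have hlog2 : 0 < Real.log 2 := Real.log_pos one_lt_two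
    -- -a + μ*(e-1) = μ*(e-2) - L ≤ L*(e-2) - L = L*(e-3) < log ε
    have hμL : μ * (Real.exp 1 - 2) ≤ L * (Real.exp 1 - 2) := by
      have : (0:ℝ) ≤ Real.exp 1 - 2 := by
        have := Real.add_one_le_exp (1:ℝ); linarith
      nlinarith
    rw [hlogε, hadef, hLdef]
    rw [hLdef] at hμL
    nlinarith [hμ, hu, hlog2, hed]
  have hexpa : (0:ℝ) < Real.exp (-a) := Real.exp_pos _
  calc ∑ k ∈ (Finset.range (N + 1)).filter
        (fun k : ℕ => L < |(k : ℝ) - μ|),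
      (N.choose k : ℝ) * p ^ k * (1 - p) ^ (N - k)
      ≤ Real.exp (-a) * (p * Real.exp 1 + (1 - p)) ^ N := by rw [← h2]; exact h1
    _ ≤ Real.exp (-a) * Real.exp (μ * (Real.exp 1 - 1)) := by
        exact mul_le_mul_of_nonneg_left h3 (le_of_lt hexpa)
    _ < ε := h4
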